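/- The Hermite-type determinant of shifted Gaussian kernels is positive: for distinct reals x₁ < ... < xₙ and y₁ < ... < yₙ and t > 0, det[exp(−(x_i − y_j)²/(2t))]_{1 ≤ i,j ≤ n} > 0. -/

import Mathlib

open Finset

/-- A nontrivial linear combination of `n` exponentials cannot vanish at `n`
increasing points. -/
private lemma expsum_zero : ∀ (n : ℕ) (b c a : Fin n → ℝ), StrictMono b → StrictMono a →
    (∀ i, ∑ j, c j * Real.exp (b j * a i) = 0) → c = 0 := by
  intro n
  induction n with
  | zero => intro b c a _ _ _; funext i; exact i.elim0
  | succ n ih =>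
    intro b c a hb ha h
    set g : ℝ → ℝ := fun z => ∑ j, c j * Real.exp ((b j - b 0) * z) with hgdef
    have hgz : ∀ i, g (a i) = 0 := by
      intro i
      have he : g (a i) = Real.exp (-(b 0 * a i)) * ∑ j, c j * Real.exp (b j * a i) := by
        rw [hgdef, Finset.mul_sum]
        refine Finset.sum_congr rfl fun j _ => ?_
        rw [show (b j - b 0) * a i = -(b 0 * a i) + b j * a i by ring, Real.exp_add]
        ring
      rw [he, h i, mul_zero]
    have hderiv : ∀ z : ℝ, HasDerivAt g
        (∑ j, c j * ((b j - b 0) * Real.exp ((b j - b 0) * z))) z := by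
      intro z
      refine HasDerivAt.fun_sum fun j _ => ?_
      have h1 : HasDerivAt (fun z : ℝ => (b j - b 0) * z) (b j - b 0) z := by
        simpa using (hasDerivAt_id z).const_mul (b j - b 0)
      have h2 := (Real.hasDerivAt_exp ((b j - b 0) * z)).comp z h1
      simpa [mul_comm, mul_left_comm] using h2.const_mul (c j)
    have hex : ∀ i : Fin n, ∃ z ∈ Set.Ioo (a i.castSucc) (a i.succ), deriv g z = 0 := by
      intro i
      refine exists_deriv_eq_zero (ha (Fin.castSucc_lt_succ (i := i))) ?_ ?_
      · exact fun z _ => ((hderiv z).continuousAt).continuousWithinAt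
      · rw [hgz, hgz]
    choose a' ha'mem ha'z using hex
    have ha' : StrictMono a' := by
      intro i j hij
      calc a' i < a i.succ := (ha'mem i).2
        _ ≤ a j.castSucc := ha.monotone (by
              simp only [Fin.le_def, Fin.lt_def, Fin.val_succ, Fin.coe_castSucc] at hij ⊢
              omega)
        _ < a' j := (ha'mem j).1
    have hb' : StrictMono fun j : Fin n => b j.succ - b 0 := fun i j hij =>
      sub_lt_sub_right (hb (Fin.succ_lt_succ_iff.mpr hij)) _
    have hc' : (fun j : Fin n => c j.succ * (b j.succ - b 0)) = 0 := by
      apply ih _ _ a' hb' ha'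
      intro i
      have hz := ha'z i
      rw [(hderiv (a' i)).deriv, Fin.sum_univ_succ] at hz
      simp only [sub_self, zero_mul, mul_zero, zero_add] at hz
      rw [← hz]
      exact Finset.sum_congr rfl fun j _ => by ring
    have hcs : ∀ j : Fin n, c j.succ = 0 := by
      intro j
      have h1 := congrFun hc' j
      have h2 : b j.succ - b 0 ≠ 0 := sub_ne_zero.mpr (hb (Fin.succ_pos j)).ne'
      simpa [h2, mul_eq_zero] using h1
    have hc0 : c 0 = 0 := by
      have h0 := h 0
      rw [Fin.sum_univ_succ] at h0
      simpa [hcs, Real.exp_ne_zero] using h0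
    funext j
    exact Fin.cases hc0 hcs j

private lemma expker_det_ne_zero {n : ℕ} (a b : Fin n → ℝ) (ha : StrictMono a)
    (hb : StrictMono b) :
    Matrix.det (Matrix.of fun i j => Real.exp (a i * b j)) ≠ 0 := by
  intro hdet
  obtain ⟨v, hv, hmv⟩ := Matrix.exists_mulVec_eq_zero_iff.mpr hdet
  apply hv
  apply expsum_zero n b v a hb ha
  intro i
  have hrow := congrFun hmv i
  simp only [Matrix.mulVec, dotProduct, Matrix.of_apply, Pi.zero_apply] at hrow
  rw [← hrow]
  exact Finset.sum_congr rfl fun j _ => by rw [mul_comm (a i) (b j)]; ring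

private lemma expker_psd {n : ℕ} (b : Fin n → ℝ) :
    Matrix.PosSemidef (Matrix.of fun i j => Real.exp (b i * b j)) := by
  rw [Matrix.posSemidef_iff_dotProduct_mulVec]
  constructor
  · show _ = _
    ext i j
    simp [Matrix.conjTranspose_apply, mul_comm]
  · intro v
    have hexp : ∀ s : ℝ, Real.exp s = ∑' k : ℕ, s ^ k / (Nat.factorial k : ℝ) := by
      intro s
      rw [Real.exp_eq_exp_ℝ, NormedSpace.exp_eq_tsum_div]
    have hsum : ∀ i j : Fin n, Summable (fun k : ℕ => v i * v j * ((b i * b j) ^ k / (Nat.factorial k : ℝ))) :=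
      fun i j => (Real.summable_pow_div_factorial _).mul_left _
    have e1 : dotProduct (star v) ((Matrix.of fun i j => Real.exp (b i * b j)).mulVec v)
        = ∑ i, ∑ j, v i * v j * Real.exp (b i * b j) := by
      simp only [dotProduct, Matrix.mulVec, Matrix.of_apply, star_trivial,
        Finset.mul_sum]
      exact Finset.sum_congr rfl fun i _ => Finset.sum_congr rfl fun j _ => by ring
    rw [e1]
    have e2 : ∑ i, ∑ j, v i * v j * Real.exp (b i * b j)
        = ∑' k : ℕ, ∑ i, ∑ j, v i * v j * ((b i * b j) ^ k / (Nat.factorial k : ℝ)) := by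
      calc ∑ i, ∑ j, v i * v j * Real.exp (b i * b j)
          = ∑ i, ∑ j, ∑' k : ℕ, v i * v j * ((b i * b j) ^ k / (Nat.factorial k : ℝ)) :=
            Finset.sum_congr rfl fun i _ => Finset.sum_congr rfl fun j _ => by
              rw [hexp, tsum_mul_left]
        _ = ∑ i, ∑' k : ℕ, ∑ j, v i * v j * ((b i * b j) ^ k / (Nat.factorial k : ℝ)) :=
            Finset.sum_congr rfl fun i _ => (Summable.tsum_finsetSum fun j _ => hsum i j).symm
        _ = ∑' k : ℕ, ∑ i, ∑ j, v i * v j * ((b i * b j) ^ k / (Nat.factorial k : ℝ)) :=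
            (Summable.tsum_finsetSum fun i _ => summable_sum fun j _ => hsum i j).symm
    rw [e2]
    refine tsum_nonneg fun k => ?_
    have e3 : ∑ i, ∑ j, v i * v j * ((b i * b j) ^ k / (Nat.factorial k : ℝ))
        = (∑ i, v i * b i ^ k) ^ 2 / (Nat.factorial k : ℝ) := by
      rw [pow_two, Finset.sum_mul_sum, Finset.sum_div]
      refine Finset.sum_congr rfl fun i _ => ?_
      rw [Finset.sum_div]
      refine Finset.sum_congr rfl fun j _ => ?_
      rw [mul_pow]
      ring
    rw [e3]
    exact div_nonneg (sq_nonneg _) (Nat.cast_nonneg _)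

private lemma expker_det_pos_diag {n : ℕ} (b : Fin n → ℝ) (hb : StrictMono b) :
    0 < Matrix.det (Matrix.of fun i j => Real.exp (b i * b j)) := by
  have hne := expker_det_ne_zero b b hb hb
  have h := expker_psd b
  exact lt_of_le_of_ne h.det_nonneg (Ne.symm hne)

private lemma expker_det_pos {n : ℕ} (a b : Fin n → ℝ) (ha : StrictMono a)
    (hb : StrictMono b) :
    0 < Matrix.det (Matrix.of fun i j => Real.exp (a i * b j)) := by
  let u : ℝ → Fin n → ℝ := fun s i => (1 - s) * a i + s * b i
  let F : ℝ → ℝ := fun s => Matrix.det (Matrix.of fun i j => Real.exp (u s i * b j))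
  have hu0 : u 0 = a := by funext i; simp [u]
  have hu1 : u 1 = b := by funext i; simp [u]
  have hmono : ∀ s ∈ Set.Icc (0 : ℝ) 1, StrictMono (u s) := by
    intro s hs i j hij
    rcases eq_or_lt_of_le hs.1 with h0 | h0
    · show u s i < u s j
      rw [← h0, hu0]
      exact ha hij
    · have h1 : (1 - s) * a i ≤ (1 - s) * a j :=
        mul_le_mul_of_nonneg_left (ha hij).le (by linarith [hs.2])
      have h2 : s * b i < s * b j := mul_lt_mul_of_pos_left (hb hij) h0
      show (1 - s) * a i + s * b i < (1 - s) * a j + s * b j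
      linarith
  have hne : ∀ s ∈ Set.Icc (0 : ℝ) 1, F s ≠ 0 := fun s hs =>
    expker_det_ne_zero _ b (hmono s hs) hb
  have hcont : Continuous F := by
    apply Continuous.matrix_det
    apply continuous_matrix
    intro i j
    show Continuous fun s : ℝ => Real.exp (((1 - s) * a i + s * b i) * b j)
    fun_prop
  have hF1 : 0 < F 1 := by
    show 0 < Matrix.det (Matrix.of fun i j => Real.exp (u 1 i * b j))
    rw [hu1]
    exact expker_det_pos_diag b hb
  have hF0 : F 0 = Matrix.det (Matrix.of fun i j => Real.exp (a i * b j)) := by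
    show Matrix.det (Matrix.of fun i j => Real.exp (u 0 i * b j)) = _
    rw [hu0]
  by_contra hle
  push_neg at hle
  rw [← hF0] at hle
  have h0lt : F 0 < 0 := lt_of_le_of_ne hle (hne 0 (by norm_num))
  have hiv := intermediate_value_Icc (by norm_num : (0 : ℝ) ≤ 1) hcont.continuousOn
  obtain ⟨s, hs, hFs⟩ := hiv ⟨h0lt.le, hF1.le⟩
  exact hne s hs hFs

theorem gaussian_kernel_det_pos (n : ℕ) (x y : Fin n → ℝ)
    (hx : StrictMono x) (hy : StrictMono y) (t : ℝ) (ht : 0 < t) :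
    0 < Matrix.det (Matrix.of fun i j => Real.exp (-(x i - y j) ^ 2 / (2 * t))) := by
  have hentry : ∀ i j, Real.exp (-(x i - y j) ^ 2 / (2 * t)) =
      Real.exp (-(x i) ^ 2 / (2 * t)) *
        (Real.exp (-(y j) ^ 2 / (2 * t)) * Real.exp (x i * (y j / t))) := by
    intro i j
    rw [← Real.exp_add, ← Real.exp_add]
    congr 1
    field_simp
    ring
  have h1 : (Matrix.of fun i j => Real.exp (-(x i - y j) ^ 2 / (2 * t)))
      = Matrix.of fun i j => Real.exp (-(x i) ^ 2 / (2 * t)) *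
          ((Matrix.of fun i j => Real.exp (-(y j) ^ 2 / (2 * t)) *
            Real.exp (x i * (y j / t))) i j) := by
    ext i j
    simp only [Matrix.of_apply]
    exact hentry i j
  rw [h1, Matrix.det_mul_column]
  have h2 : (Matrix.of fun i j => Real.exp (-(y j) ^ 2 / (2 * t)) *
        Real.exp (x i * (y j / t)))
      = Matrix.of fun i j => Real.exp (-(y j) ^ 2 / (2 * t)) *
          ((Matrix.of fun i j => Real.exp (x i * (y j / t))) i j) := rfl
  rw [h2, Matrix.det_mul_row]
  have hy' : StrictMono fun j => y j / t := fun i j hij =>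
    (div_lt_div_iff_of_pos_right ht).mpr (hy hij)
  have hpos := expker_det_pos x (fun j => y j / t) hx hy'
  have hp1 : 0 < ∏ i, Real.exp (-(x i) ^ 2 / (2 * t)) :=
    Finset.prod_pos fun i _ => Real.exp_pos _
  have hp2 : 0 < ∏ j, Real.exp (-(y j) ^ 2 / (2 * t)) :=
    Finset.prod_pos fun j _ => Real.exp_pos _
  exact mul_pos hp1 (mul_pos hp2 hpos)
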